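/- Covering by permutations for the constant composition ensemble (Theorem 5): Let X be a finite alphabet. For every R̃ > 0 and ε > 0 there exists N₀ ∈ ℕ such that for all n ≥ N₀ and every n-type Q on X with H(Q) ≥ R̃ + ε, setting N = ⌈exp(nR̃)⌉, there exist k ∈ ℕ with k ≤ exp(n(H(Q) − R̃ + ε)) and permutations π_1, …, π_k of {1,…,n} such that ⋃_{i=1}^{k} π_i[C] = T_n(Q) holds for at least half of the N-tuples C ∈ T_n(Q)^N, i.e., for at least |T_n(Q)|^N / 2 of them (where π[C] denotes the set of permuted entries {π[x] : x an entry of C}). -/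

import Mathlib

open scoped BigOperators Classical

noncomputable section

/-- A probability mass function on a finite alphabet. -/
def IsPMF {X : Type*} [Fintype X] (p : X → ℝ) : Prop :=
  (∀ a, 0 ≤ p a) ∧ ∑ a, p a = 1

/-- A (discrete memoryless) channel from `X` to `Y`: every row is a pmf. -/
def IsChannel {X Y : Type*} [Fintype X] [Fintype Y] (W : X → Y → ℝ) : Prop :=
  ∀ x, IsPMF (W x)

/-- Empirical distribution (type) of a sequence `x : Fin n → X`. -/
def empDist {X : Type*} [Fintype X] {n : ℕ} (x : Fin n → X) (a : X) : ℝ :=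
  ((Finset.univ.filter fun t => x t = a).card : ℝ) / n

/-- `P` is an `n`-type on `X`: a pmf all of whose masses are multiples of `1/n`. -/
def IsNType {X : Type*} [Fintype X] (n : ℕ) (P : X → ℝ) : Prop :=
  IsPMF P ∧ ∀ a, ∃ k : ℕ, (n : ℝ) * P a = k

/-- The type class `T_n(P)`: all sequences with empirical distribution `P`. -/
def typeClass {X : Type*} [Fintype X] (n : ℕ) (P : X → ℝ) : Finset (Fin n → X) :=
  Finset.univ.filter fun x => empDist x = P

/-- Shannon entropy (natural logarithm). -/
def shEntropy {X : Type*} [Fintype X] (p : X → ℝ) : ℝ :=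
  ∑ a, Real.negMulLog (p a)

/-- Kullback–Leibler divergence (real-valued, with the usual `log` conventions). -/
def dKL {X : Type*} [Fintype X] (q p : X → ℝ) : ℝ :=
  ∑ a, q a * Real.log (q a / p a)

/-- Conditional KL divergence `D(V‖W|P)`. -/
def condDKL {X Y : Type*} [Fintype X] [Fintype Y] (V W : X → Y → ℝ) (P : X → ℝ) : ℝ :=
  ∑ x, P x * dKL (V x) (W x)

def margFst {X Y : Type*} [Fintype X] [Fintype Y] (Q : X × Y → ℝ) (x : X) : ℝ :=
  ∑ y, Q (x, y)

def margSnd {X Y : Type*} [Fintype X] [Fintype Y] (Q : X × Y → ℝ) (y : Y) : ℝ :=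
  ∑ x, Q (x, y)

/-- Mutual information of a joint pmf (natural logarithm). -/
def mutualInfo {X Y : Type*} [Fintype X] [Fintype Y] (Q : X × Y → ℝ) : ℝ :=
  ∑ x, ∑ y, Q (x, y) * Real.log (Q (x, y) / (margFst Q x * margSnd Q y))

/-- Mutual information `I(P, V)` of the joint pmf `P(x)·V(y|x)`. -/
def miPV {X Y : Type*} [Fintype X] [Fintype Y] (P : X → ℝ) (V : X → Y → ℝ) : ℝ :=
  mutualInfo fun p => P p.1 * V p.1 p.2

/-- Positive part `|a|⁺ = max (a, 0)`. -/
def plusPart (a : ℝ) : ℝ := max a 0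

def margXY {X Y U : Type*} [Fintype X] [Fintype Y] [Fintype U] (Q : X × Y × U → ℝ) :
    X × Y → ℝ := fun p => ∑ u, Q (p.1, p.2, u)

def margYU {X Y U : Type*} [Fintype X] [Fintype Y] [Fintype U] (Q : X × Y × U → ℝ) :
    Y × U → ℝ := fun p => ∑ x, Q (x, p.1, p.2)

def margXU {X Y U : Type*} [Fintype X] [Fintype Y] [Fintype U] (Q : X × Y × U → ℝ) :
    X × U → ℝ := fun p => ∑ y, Q (p.1, y, p.2)

def margX3 {X Y U : Type*} [Fintype X] [Fintype Y] [Fintype U] (Q : X × Y × U → ℝ)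
    (x : X) : ℝ := ∑ y, ∑ u, Q (x, y, u)

def margY3 {X Y U : Type*} [Fintype X] [Fintype Y] [Fintype U] (Q : X × Y × U → ℝ)
    (y : Y) : ℝ := ∑ x, ∑ u, Q (x, y, u)

/-- Conditional mutual information `I_Q(X;U|Y)` of a joint pmf `Q` on `X × Y × U`. -/
def condMI3 {X Y U : Type*} [Fintype X] [Fintype Y] [Fintype U] (Q : X × Y × U → ℝ) : ℝ :=
  ∑ x, ∑ y, ∑ u, Q (x, y, u) *
    Real.log (Q (x, y, u) * margY3 Q y / (margXY Q (x, y) * margYU Q (y, u)))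

/-- `D(Q_{Y|X} ‖ W | P)` written via the joint pmf `Q_{XY}` (whose `X`-marginal is `P`). -/
def condDKLJoint {X Y : Type*} [Fintype X] [Fintype Y] (QXY : X × Y → ℝ)
    (W : X → Y → ℝ) (P : X → ℝ) : ℝ :=
  ∑ x, ∑ y, QXY (x, y) * Real.log (QXY (x, y) / (P x * W x y))

/-- Number of messages `M_n = ⌈exp (n R)⌉`. -/
def Mn (R : ℝ) (n : ℕ) : ℕ := ⌈Real.exp (n * R)⌉₊

/-- All codebooks of `M` codewords, each of constant composition `P`. -/
def ccCodebooks {X : Type*} [Fintype X] (n M : ℕ) (P : X → ℝ) :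
    Finset (Fin M → Fin n → X) :=
  Finset.univ.filter fun C => ∀ m, C m ∈ typeClass n P

/-- Ensemble-average decoding error probability of an `(n,R,B)`-code for the IB channel:
the expectation, over a codebook drawn uniformly from the constant composition ensemble of
type `P`, of the average over messages `m` of the probability (under the memoryless channel
`W`) that the decoder output differs from `m` when codeword `C m` is sent. -/
def avgError {X Y L : Type*} [Fintype X] [Fintype Y] (W : X → Y → ℝ) (n M : ℕ)
    (P : X → ℝ) (φ : (Fin n → Y) → L) (ψ : L → (Fin M → Fin n → X) → Fin M) : ℝ :=
  (∑ C ∈ ccCodebooks n M P, (M : ℝ)⁻¹ * ∑ m : Fin M, ∑ y : Fin n → Y,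
      if ψ (φ y) C = m then 0 else ∏ t, W (C m t) (y t)) /
    ((ccCodebooks n M P).card : ℝ)



section AuxCovering

open Finset

variable {X : Type*} [Fintype X]

lemma empDist_comp_perm {n : ℕ} (x : Fin n → X) (σ : Equiv.Perm (Fin n)) :
    empDist (x ∘ σ) = empDist x := by
  funext a
  unfold empDist
  congr 2
  apply Finset.card_bij (fun t _ => σ t)
  · intro t ht; simp_all
  · intro a _ b _ h; exact σ.injective h
  · intro b hb; exact ⟨σ.symm b, by simp_all, by simp⟩

lemma mem_typeClass {n : ℕ} {Q : X → ℝ} {x : Fin n → X} :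
    x ∈ typeClass n Q ↔ empDist x = Q := by simp [typeClass]

lemma comp_perm_mem_typeClass {n : ℕ} {Q : X → ℝ} {x : Fin n → X} (σ : Equiv.Perm (Fin n)) :
    x ∘ ⇑σ ∈ typeClass n Q ↔ x ∈ typeClass n Q := by
  simp [mem_typeClass, empDist_comp_perm]

lemma exists_perm_comp {n : ℕ} {Q : X → ℝ} (hn : 0 < n) {x y : Fin n → X}
    (hx : x ∈ typeClass n Q) (hy : y ∈ typeClass n Q) :
    ∃ σ : Equiv.Perm (Fin n), x ∘ ⇑σ = y := by
  rw [mem_typeClass] at hx hy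
  have hfib : ∀ c : X, Fintype.card {b : Fin n // y b = c} = Fintype.card {a : Fin n // x a = c} := by
    intro c
    have h1 : Fintype.card {b : Fin n // y b = c} = (univ.filter fun t => y t = c).card := by
      simp [Fintype.card_subtype]
    have h2 : Fintype.card {a : Fin n // x a = c} = (univ.filter fun t => x t = c).card := by
      simp [Fintype.card_subtype]
    rw [h1, h2]
    have := congrFun (hx.trans hy.symm) c
    unfold empDist at this
    have hn' : (n : ℝ) ≠ 0 := by positivity
    field_simp at this
    exact_mod_cast this.symm
  let e : Fin n ≃ Fin n := Equiv.ofFiberEquiv (f := y) (g := x)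
    (fun c => Fintype.equivOfCardEq (hfib c))
  refine ⟨e, funext fun a => ?_⟩
  exact Equiv.ofFiberEquiv_map (f := y) (g := x) _ a

lemma fiber_card_const {n : ℕ} {Q : X → ℝ} (hn : 0 < n) {y z : Fin n → X}
    (hy : y ∈ typeClass n Q) (hz : z ∈ typeClass n Q) :
    (univ.filter fun g : Equiv.Perm (Fin n) => y ∘ ⇑g⁻¹ = z).card
      = (univ.filter fun g : Equiv.Perm (Fin n) => y ∘ ⇑g⁻¹ = y).card := by
  obtain ⟨σ, hσ⟩ := exists_perm_comp hn hy hz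
  have key : ∀ (h : Equiv.Perm (Fin n)) (τ : Equiv.Perm (Fin n)),
      y ∘ ⇑(τ * h)⁻¹ = (y ∘ ⇑h⁻¹) ∘ ⇑τ⁻¹ := by
    intro h τ; funext t; simp [mul_inv_rev]
  apply Finset.card_bij' (fun g _ => σ * g) (fun h _ => σ⁻¹ * h)
  · intro g hg
    simp only [mem_filter, mem_univ, true_and] at hg ⊢
    rw [key, hg, ← hσ]
    funext t; simp
  · intro h hh
    simp only [mem_filter, mem_univ, true_and] at hh ⊢
    have h2 : y ∘ ⇑(σ⁻¹ * h)⁻¹ = (y ∘ ⇑h⁻¹) ∘ ⇑σ := by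
      funext t; simp [mul_inv_rev]
    rw [h2, hh, hσ]
  · intro g _; group
  · intro h _; group

lemma fibercard_eq {n : ℕ} {Q : X → ℝ} (hn : 0 < n) {x : Fin n → X}
    (hx : x ∈ typeClass n Q) (a : X) :
    (((univ.filter fun t => x t = a).card : ℝ)) = n * Q a := by
  rw [mem_typeClass] at hx
  have := congrFun hx a
  unfold empDist at this
  have hn' : (n : ℝ) ≠ 0 := by positivity
  field_simp at this
  rw [this]

lemma prod_eq_exp_neg_entropy {n : ℕ} {Q : X → ℝ} (hn : 0 < n) (hQ : IsNType n Q)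
    {x : Fin n → X} (hx : x ∈ typeClass n Q) :
    ∏ t, Q (x t) = Real.exp (-(n * shEntropy Q)) := by
  have h1 : ∏ t, Q (x t) = ∏ a : X, ∏ t ∈ univ.filter fun t => x t = a, Q (x t) :=
    (Finset.prod_fiberwise univ x (fun t => Q (x t))).symm
  have h2 : ∀ a : X, (∏ t ∈ univ.filter fun t => x t = a, Q (x t))
      = Q a ^ (univ.filter fun t => x t = a).card := by
    intro a
    rw [Finset.prod_congr rfl (fun t ht => by
      rw [show x t = a from (Finset.mem_filter.mp ht).2]), Finset.prod_const]
  have h3 : -(n * shEntropy Q) = ∑ a : X, (n : ℝ) * Q a * Real.log (Q a) := by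
    unfold shEntropy Real.negMulLog
    rw [Finset.mul_sum, ← Finset.sum_neg_distrib]
    apply Finset.sum_congr rfl; intro a _; ring
  rw [h1, h3, Real.exp_sum]
  apply Finset.prod_congr rfl
  intro a _
  rw [h2 a]
  rcases eq_or_lt_of_le (hQ.1.1 a) with hQa | hQa
  · have hc : (univ.filter fun t => x t = a).card = 0 := by
      have := fibercard_eq hn hx a
      rw [← hQa, mul_zero] at this
      exact_mod_cast this
    rw [hc, ← hQa]
    simp
  · have hc : ((univ.filter fun t => x t = a).card : ℝ) = n * Q a := fibercard_eq hn hx a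
    rw [show (n : ℝ) * Q a * Real.log (Q a)
        = ((univ.filter fun t => x t = a).card : ℝ) * Real.log (Q a) by rw [hc]]
    rw [← Real.exp_log hQa, ← Real.exp_nat_mul, Real.log_exp]

lemma card_typeClass_le {n : ℕ} {Q : X → ℝ} (hn : 0 < n) (hQ : IsNType n Q) :
    ((typeClass n Q).card : ℝ) ≤ Real.exp (n * shEntropy Q) := by
  have key : ((typeClass n Q).card : ℝ) * Real.exp (-(n * shEntropy Q)) ≤ 1 := by
    have h1 : ((typeClass n Q).card : ℝ) * Real.exp (-(n * shEntropy Q))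
        = ∑ x ∈ typeClass n Q, ∏ t, Q (x t) := by
      rw [Finset.sum_congr rfl (fun x hx => prod_eq_exp_neg_entropy hn hQ hx),
        Finset.sum_const, nsmul_eq_mul]
    have h2 : ∑ x ∈ typeClass n Q, ∏ t, Q (x t) ≤ ∑ x : Fin n → X, ∏ t, Q (x t) := by
      apply Finset.sum_le_sum_of_subset_of_nonneg (Finset.subset_univ _)
      intro x _ _
      exact Finset.prod_nonneg fun t _ => hQ.1.1 (x t)
    have h3 : ∑ x : Fin n → X, ∏ t, Q (x t) = 1 := by
      have := Finset.prod_univ_sum (fun _ : Fin n => (univ : Finset X)) (fun _ a => Q a)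
      have hpi : Fintype.piFinset (fun _ : Fin n => (univ : Finset X)) = univ := by
        ext f; simp [Fintype.mem_piFinset]
      rw [hpi] at this
      rw [← this]
      simp [hQ.1.2]
    linarith
  calc ((typeClass n Q).card : ℝ)
      = ((typeClass n Q).card : ℝ) * Real.exp (-(n * shEntropy Q)) * Real.exp (n * shEntropy Q) := by
        rw [mul_assoc, ← Real.exp_add]; simp
    _ ≤ 1 * Real.exp (n * shEntropy Q) :=
        mul_le_mul_of_nonneg_right key (Real.exp_pos _).le
    _ = Real.exp (n * shEntropy Q) := one_mul _

lemma log_le_two_sqrt {y : ℝ} (hy : 0 < y) : Real.log y ≤ 2 * Real.sqrt y := by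
  have h := Real.log_le_sub_one_of_pos (Real.sqrt_pos.mpr hy)
  have h2 : Real.log (Real.sqrt y) = Real.log y / 2 := Real.log_sqrt hy.le
  nlinarith [Real.sqrt_nonneg y]

lemma sq_div_four_le_exp {x : ℝ} (hx : 0 ≤ x) : x ^ 2 / 4 ≤ Real.exp x := by
  have h := Real.add_one_le_exp (x / 2)
  have h2 : Real.exp (x / 2) * Real.exp (x / 2) = Real.exp x := by
    rw [← Real.exp_add]; ring_nf
  nlinarith [Real.exp_pos (x / 2)]

lemma eventually_affine_le_quad (a b c : ℝ) (hc : 0 < c) :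
    ∀ᶠ n : ℕ in Filter.atTop, a + b * (n : ℝ) ≤ c * (n : ℝ) ^ 2 := by
  filter_upwards [Filter.eventually_ge_atTop (max 1 ⌈(|a| + |b|) / c⌉₊)] with n hn
  have h1 : (1 : ℝ) ≤ (n : ℝ) := by
    exact_mod_cast le_trans (le_max_left _ _) hn
  have h2 : (|a| + |b|) / c ≤ (n : ℝ) := by
    refine le_trans (Nat.le_ceil _) ?_
    exact_mod_cast le_trans (le_max_right _ _) hn
  have h3 : |a| + |b| ≤ c * (n : ℝ) := by
    rw [div_le_iff₀ hc] at h2; linarith [h2]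
  nlinarith [le_abs_self a, le_abs_self b, abs_nonneg a, abs_nonneg b,
    mul_le_mul_of_nonneg_right h3 (by positivity : (0:ℝ) ≤ (n:ℝ))]

set_option maxHeartbeats 800000 in
lemma exists_good_perms {n : ℕ} {Q : X → ℝ} (hn : 0 < n) (k r : ℕ)
    (ht : 0 < (typeClass n Q).card)
    (harith : (typeClass n Q).card ^ (r + 1) * r ^ k < (typeClass n Q).card ^ k) :
    ∃ π : Fin k → Equiv.Perm (Fin n),
      ∀ y ∈ typeClass n Q, r + 1 ≤ (Finset.univ.image fun i => y ∘ ⇑((π i)⁻¹)).card := by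
  classical
  set T := typeClass n Q with hT
  set t := T.card with htdef
  obtain ⟨y₀, hy₀⟩ := Finset.card_pos.mp ht
  set c := (univ.filter fun g : Equiv.Perm (Fin n) => y₀ ∘ ⇑g⁻¹ = y₀).card with hcdef
  have hPerm_mem : ∀ (y : Fin n → X), y ∈ T → ∀ g : Equiv.Perm (Fin n), y ∘ ⇑g⁻¹ ∈ T :=
    fun y hy g => (comp_perm_mem_typeClass g⁻¹).mpr hy
  have hcardPerm : ∀ y ∈ T, (univ : Finset (Equiv.Perm (Fin n))).card
      = t * (univ.filter fun g : Equiv.Perm (Fin n) => y ∘ ⇑g⁻¹ = y).card := by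
    intro y hy
    rw [Finset.card_eq_sum_card_fiberwise (f := fun g : Equiv.Perm (Fin n) => y ∘ ⇑g⁻¹)
      (t := T) (fun g _ => hPerm_mem y hy g)]
    rw [Finset.sum_congr rfl (fun z hz => fiber_card_const hn hy hz), Finset.sum_const,
      smul_eq_mul]
  have hcy : ∀ y ∈ T, (univ.filter fun g : Equiv.Perm (Fin n) => y ∘ ⇑g⁻¹ = y).card = c := by
    intro y hy
    exact Nat.eq_of_mul_eq_mul_left ht ((hcardPerm y hy).symm.trans (hcardPerm y₀ hy₀))
  have hcpos : 0 < c := by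
    apply Finset.card_pos.mpr
    refine ⟨1, ?_⟩
    simp
    rfl
  set r' := min r t with hr'def
  have hbady : ∀ y ∈ T,
      (univ.filter fun π : Fin k → Equiv.Perm (Fin n) =>
        (univ.image fun i => y ∘ ⇑((π i)⁻¹)).card ≤ r).card ≤ t ^ r * (r * c) ^ k := by
    intro y hy
    have hsub : (univ.filter fun π : Fin k → Equiv.Perm (Fin n) =>
          (univ.image fun i => y ∘ ⇑((π i)⁻¹)).card ≤ r)
        ⊆ (T.powersetCard r').biUnion fun S =>
            Fintype.piFinset fun _ : Fin k =>
              univ.filter fun g : Equiv.Perm (Fin n) => y ∘ ⇑g⁻¹ ∈ S := by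
      intro π hπ
      simp only [mem_filter, mem_univ, true_and] at hπ
      have himg : (univ.image fun i => y ∘ ⇑((π i)⁻¹)) ⊆ T := by
        intro z hz
        obtain ⟨i, _, rfl⟩ := Finset.mem_image.mp hz
        exact hPerm_mem y hy _
      obtain ⟨S, hS1, hS2, hS3⟩ := Finset.exists_subsuperset_card_eq himg
        (le_min hπ (Finset.card_le_card himg)) (min_le_right _ _)
      refine Finset.mem_biUnion.mpr ⟨S, Finset.mem_powersetCard.mpr ⟨hS2, hS3⟩, ?_⟩
      refine Fintype.mem_piFinset.mpr fun i => ?_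
      simp only [mem_filter, mem_univ, true_and]
      exact hS1 (Finset.mem_image.mpr ⟨i, Finset.mem_univ i, rfl⟩)
    have hScard : ∀ S ∈ T.powersetCard r',
        (Fintype.piFinset fun _ : Fin k =>
          univ.filter fun g : Equiv.Perm (Fin n) => y ∘ ⇑g⁻¹ ∈ S).card = (r' * c) ^ k := by
      intro S hS
      obtain ⟨hST, hSc⟩ := Finset.mem_powersetCard.mp hS
      rw [Fintype.card_piFinset]
      have hfc : (univ.filter fun g : Equiv.Perm (Fin n) => y ∘ ⇑g⁻¹ ∈ S).card = r' * c := by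
        have hup : (univ.filter fun g : Equiv.Perm (Fin n) => y ∘ ⇑g⁻¹ ∈ S).card
            = ∑ z ∈ S, ((univ.filter fun g : Equiv.Perm (Fin n) => y ∘ ⇑g⁻¹ ∈ S).filter
                fun g : Equiv.Perm (Fin n) => y ∘ ⇑g⁻¹ = z).card :=
          Finset.card_eq_sum_card_fiberwise (fun g hg => (Finset.mem_filter.mp hg).2)
        have heq : ∀ z ∈ S, (((univ.filter fun g : Equiv.Perm (Fin n) => y ∘ ⇑g⁻¹ ∈ S).filter
            fun g : Equiv.Perm (Fin n) => y ∘ ⇑g⁻¹ = z)).card = c := by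
          intro z hz
          have hee : ((univ.filter fun g : Equiv.Perm (Fin n) => y ∘ ⇑g⁻¹ ∈ S).filter
              fun g : Equiv.Perm (Fin n) => y ∘ ⇑g⁻¹ = z)
              = univ.filter fun g : Equiv.Perm (Fin n) => y ∘ ⇑g⁻¹ = z := by
            ext g
            simp only [Finset.mem_filter, Finset.mem_univ, true_and]
            exact ⟨fun h => h.2, fun h => ⟨h ▸ hz, h⟩⟩
          rw [hee]
          exact (fiber_card_const hn hy (hST hz)).trans (hcy y hy)
        rw [hup, Finset.sum_congr rfl heq, Finset.sum_const, smul_eq_mul, hSc]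
      rw [Finset.prod_congr rfl (fun i _ => hfc), Finset.prod_const]
      simp
    calc (univ.filter fun π : Fin k → Equiv.Perm (Fin n) =>
            (univ.image fun i => y ∘ ⇑((π i)⁻¹)).card ≤ r).card
        ≤ ((T.powersetCard r').biUnion fun S =>
            Fintype.piFinset fun _ : Fin k =>
              univ.filter fun g : Equiv.Perm (Fin n) => y ∘ ⇑g⁻¹ ∈ S).card :=
          Finset.card_le_card hsub
      _ ≤ ∑ S ∈ T.powersetCard r', (Fintype.piFinset fun _ : Fin k =>
            univ.filter fun g : Equiv.Perm (Fin n) => y ∘ ⇑g⁻¹ ∈ S).card :=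
          Finset.card_biUnion_le
      _ = ∑ _S ∈ T.powersetCard r', (r' * c) ^ k := Finset.sum_congr rfl hScard
      _ = (T.powersetCard r').card * (r' * c) ^ k := by
          rw [Finset.sum_const, smul_eq_mul]
      _ ≤ t ^ r * (r * c) ^ k := by
          rw [Finset.card_powersetCard]
          apply Nat.mul_le_mul
          · exact le_trans (Nat.choose_le_pow t r') (Nat.pow_le_pow_right ht (min_le_left _ _))
          · exact Nat.pow_le_pow_left (Nat.mul_le_mul_right c (min_le_left _ _)) k
  set Bad := univ.filter fun π : Fin k → Equiv.Perm (Fin n) =>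
    ∃ y ∈ T, (univ.image fun i => y ∘ ⇑((π i)⁻¹)).card ≤ r with hBaddef
  have hBadlt : Bad.card < (univ : Finset (Fin k → Equiv.Perm (Fin n))).card := by
    have h1 : Bad ⊆ T.biUnion fun y => univ.filter fun π : Fin k → Equiv.Perm (Fin n) =>
        (univ.image fun i => y ∘ ⇑((π i)⁻¹)).card ≤ r := by
      intro π hπ
      simp only [hBaddef, mem_filter, mem_univ, true_and] at hπ
      obtain ⟨y, hy, hle⟩ := hπ
      exact Finset.mem_biUnion.mpr ⟨y, hy, Finset.mem_filter.mpr ⟨Finset.mem_univ _, hle⟩⟩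
    have h2 : Bad.card ≤ t * (t ^ r * (r * c) ^ k) := by
      calc Bad.card ≤ _ := Finset.card_le_card h1
        _ ≤ ∑ y ∈ T, (univ.filter fun π : Fin k → Equiv.Perm (Fin n) =>
            (univ.image fun i => y ∘ ⇑((π i)⁻¹)).card ≤ r).card := Finset.card_biUnion_le
        _ ≤ ∑ _y ∈ T, t ^ r * (r * c) ^ k := Finset.sum_le_sum hbady
        _ = t * (t ^ r * (r * c) ^ k) := by rw [Finset.sum_const, smul_eq_mul]
    have h3 : (univ : Finset (Fin k → Equiv.Perm (Fin n))).card = (t * c) ^ k := by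
      rw [Finset.card_univ, Fintype.card_fun, Fintype.card_fin, ← Finset.card_univ,
        hcardPerm y₀ hy₀, ← hcdef]
    calc Bad.card ≤ t * (t ^ r * (r * c) ^ k) := h2
      _ = t ^ (r + 1) * r ^ k * c ^ k := by ring
      _ < t ^ k * c ^ k := mul_lt_mul_of_pos_right harith (pow_pos hcpos k)
      _ = (t * c) ^ k := (mul_pow t c k).symm
      _ = _ := h3.symm
  have hexists : ∃ π : Fin k → Equiv.Perm (Fin n), π ∉ Bad := by
    by_contra h
    push_neg at h
    exact absurd (Finset.card_le_card fun π _ => h π) (not_le.mpr hBadlt)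
  obtain ⟨π, hπ⟩ := hexists
  refine ⟨π, fun y hy => ?_⟩
  simp only [hBaddef, mem_filter, mem_univ, true_and, not_exists] at hπ
  push_neg at hπ
  exact hπ y hy

end AuxCovering

set_option maxHeartbeats 1600000 in
lemma arith_key (n t r k : ℕ) (Rt ε L H μ : ℝ) (hRt : 0 < Rt) (hε : 0 < ε)
    (hn1 : 1 ≤ n) (hτ2 : (2:ℝ) ≤ (t:ℝ))
    (hτexp : (t:ℝ) ≤ Real.exp (n * H))
    (hτlogL : Real.log (t:ℝ) ≤ n * L) (hL0 : 0 ≤ L)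
    (hμE : Real.exp (n * Rt) ≤ μ)
    (hrge : (t:ℝ) * Real.log (2 * (t:ℝ)) / μ ≤ (r:ℝ))
    (hrlt : (r:ℝ) < (t:ℝ) * Real.log (2 * (t:ℝ)) / μ + 1) (hr1 : 1 ≤ r)
    (hk3 : 3 ≤ k) (hkv : Real.exp ((n:ℝ) * (H - Rt + ε)) / 2 ≤ (k:ℝ))
    (h1 : Real.log (2 * (Real.log 2 + n * L)) ≤ n * Rt / 2)
    (h2 : 16 * L * (Real.log 2 + n * L) < Real.exp (n * ε) * Rt) :
    t ^ (r + 1) * r ^ k < t ^ k := by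
  have hτpos : (0:ℝ) < (t:ℝ) := by linarith
  have hμpos : (0:ℝ) < μ := lt_of_lt_of_le (Real.exp_pos _) hμE
  have hlog2pos : (0:ℝ) < Real.log 2 := Real.log_pos (by norm_num)
  have hlog2t_pos : 0 < Real.log (2 * (t:ℝ)) := Real.log_pos (by linarith)
  have hlog2tA : Real.log (2 * (t:ℝ)) ≤ Real.log 2 + n * L := by
    rw [Real.log_mul (by norm_num) (by positivity)]
    linarith
  have hreal : ((t:ℝ)) ^ (r + 1) * (r:ℝ) ^ k < (t:ℝ) ^ k := by
    rcases eq_or_lt_of_le hr1 with hr1' | hr2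
    · rw [← hr1']
      have h1k : ((1:ℕ):ℝ) ^ k = 1 := by norm_num
      rw [h1k, mul_one]
      exact pow_lt_pow_right₀ (by linarith) (by omega)
    · have hr2' : (2:ℝ) ≤ (r:ℝ) := by exact_mod_cast hr2
      have harg1 : 1 ≤ (t:ℝ) * Real.log (2 * (t:ℝ)) / μ := by linarith
      have hμtlog : μ ≤ (t:ℝ) * Real.log (2 * (t:ℝ)) := (one_le_div hμpos).mp harg1
      set A := Real.log 2 + n * L with hAdef
      have hApos : 0 < A := by positivity
      set β := 2 * A / Real.exp (n * Rt) with hβdef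
      have hE : (0:ℝ) < Real.exp (n * Rt) := Real.exp_pos _
      have hβpos : 0 < β := by positivity
      have hρβ : (r:ℝ) ≤ (t:ℝ) * β := by
        have e2 : (t:ℝ) * Real.log (2 * (t:ℝ)) / μ ≤ (t:ℝ) * A / Real.exp (n * Rt) :=
          div_le_div₀ (by positivity) (by nlinarith [hlog2tA, hτpos]) hE hμE
        calc (r:ℝ) ≤ 2 * ((t:ℝ) * Real.log (2 * (t:ℝ)) / μ) := by linarith
          _ ≤ 2 * ((t:ℝ) * A / Real.exp (n * Rt)) := by linarith
          _ = (t:ℝ) * β := by rw [hβdef]; ring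
      have hβle : β ≤ Real.exp (-((n:ℝ) * Rt / 2)) := by
        have h2A : 2 * A ≤ Real.exp ((n:ℝ) * Rt / 2) := by
          calc 2 * A = Real.exp (Real.log (2 * A)) := (Real.exp_log (by linarith)).symm
            _ ≤ Real.exp ((n:ℝ) * Rt / 2) := Real.exp_le_exp.mpr h1
        rw [hβdef, div_le_iff₀ hE, ← Real.exp_add]
        rw [show -((n:ℝ) * Rt / 2) + (n:ℝ) * Rt = (n:ℝ) * Rt / 2 by ring]
        exact h2A
      have htA : Real.exp (n * Rt) ≤ (t:ℝ) * A := by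
        calc Real.exp (n * Rt) ≤ μ := hμE
          _ ≤ (t:ℝ) * Real.log (2 * (t:ℝ)) := hμtlog
          _ ≤ (t:ℝ) * A := by nlinarith [hlog2tA, hτpos]
      have hτβ2 : 2 ≤ (t:ℝ) * β := by
        rw [hβdef, show (t:ℝ) * (2 * A / Real.exp (n * Rt))
          = 2 * ((t:ℝ) * A) / Real.exp (n * Rt) by ring, le_div_iff₀ hE]
        linarith
      have hrp1 : (r:ℝ) + 1 ≤ 2 * ((t:ℝ) * β) := by linarith
      have hlogt0 : 0 ≤ Real.log (t:ℝ) := Real.log_nonneg (by linarith)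
      have hmain : ((r:ℝ) + 1) * Real.log (t:ℝ) < (k:ℝ) * ((n:ℝ) * Rt / 2) := by
        have hG : (0:ℝ) < Real.exp (n * H) := Real.exp_pos _
        have hn' : (1:ℝ) ≤ (n:ℝ) := by exact_mod_cast hn1
        have lhs1 : ((r:ℝ) + 1) * Real.log (t:ℝ) ≤ 2 * ((t:ℝ) * β) * ((n:ℝ) * L) :=
          mul_le_mul hrp1 hτlogL hlogt0 (by positivity)
        have lhs2 : 2 * ((t:ℝ) * β) * ((n:ℝ) * L) ≤ 2 * (Real.exp (n * H) * β) * ((n:ℝ) * L) := by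
          have hh : (t:ℝ) * β ≤ Real.exp (n * H) * β :=
            mul_le_mul_of_nonneg_right hτexp hβpos.le
          have hnL : (0:ℝ) ≤ (n:ℝ) * L := by positivity
          exact mul_le_mul_of_nonneg_right
            (mul_le_mul_of_nonneg_left hh (by norm_num : (0:ℝ) ≤ 2)) hnL
        have hveq : Real.exp ((n:ℝ) * (H - Rt + ε))
            = Real.exp (n * H) * Real.exp ((n:ℝ) * ε) / Real.exp (n * Rt) := by
          rw [← Real.exp_add, ← Real.exp_sub]
          ring_nf
        have key : 2 * (Real.exp (n * H) * β) * ((n:ℝ) * L)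
            < Real.exp ((n:ℝ) * (H - Rt + ε)) / 2 * ((n:ℝ) * Rt / 2) := by
          rw [hveq, hβdef]
          rw [show 2 * (Real.exp (n * H) * (2 * A / Real.exp (n * Rt))) * ((n:ℝ) * L)
            = 4 * Real.exp (n * H) * A * ((n:ℝ) * L) / Real.exp (n * Rt) by ring]
          rw [show Real.exp (n * H) * Real.exp ((n:ℝ) * ε) / Real.exp (n * Rt) / 2 * ((n:ℝ) * Rt / 2)
            = Real.exp (n * H) * Real.exp ((n:ℝ) * ε) * ((n:ℝ) * Rt) / (4 * Real.exp (n * Rt)) by ring]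
          rw [div_lt_div_iff₀ hE (by positivity)]
          have hfac : (0:ℝ) < Real.exp (n * H) * (n:ℝ) * Real.exp (n * Rt) := by positivity
          linarith [mul_lt_mul_of_pos_left h2 hfac]
        have rhs1 : Real.exp ((n:ℝ) * (H - Rt + ε)) / 2 * ((n:ℝ) * Rt / 2)
            ≤ (k:ℝ) * ((n:ℝ) * Rt / 2) := by
          apply mul_le_mul_of_nonneg_right hkv (by positivity)
        calc ((r:ℝ) + 1) * Real.log (t:ℝ) ≤ 2 * ((t:ℝ) * β) * ((n:ℝ) * L) := lhs1
          _ ≤ 2 * (Real.exp (n * H) * β) * ((n:ℝ) * L) := lhs2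
          _ < Real.exp ((n:ℝ) * (H - Rt + ε)) / 2 * ((n:ℝ) * Rt / 2) := key
          _ ≤ (k:ℝ) * ((n:ℝ) * Rt / 2) := rhs1
      have hsmall : β ^ k * (t:ℝ) ^ (r + 1) < 1 := by
        have hx : (0:ℝ) < β ^ k * (t:ℝ) ^ (r + 1) := by positivity
        have hlogsum : Real.log (β ^ k * (t:ℝ) ^ (r + 1)) < 0 := by
          rw [Real.log_mul (by positivity) (by positivity), Real.log_pow, Real.log_pow]
          have hlogβ : Real.log β ≤ -((n:ℝ) * Rt / 2) := by
            calc Real.log β ≤ Real.log (Real.exp (-((n:ℝ) * Rt / 2))) :=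
                  Real.log_le_log hβpos hβle
              _ = -((n:ℝ) * Rt / 2) := Real.log_exp _
          have hk0 : (0:ℝ) ≤ (k:ℝ) := Nat.cast_nonneg k
          have hkβ : (k:ℝ) * Real.log β ≤ (k:ℝ) * -((n:ℝ) * Rt / 2) :=
            mul_le_mul_of_nonneg_left hlogβ hk0
          push_cast
          nlinarith [hmain, hkβ]
        have he := Real.exp_lt_exp.mpr hlogsum
        rwa [Real.exp_log hx, Real.exp_zero] at he
      calc (t:ℝ) ^ (r + 1) * (r:ℝ) ^ k
          ≤ (t:ℝ) ^ (r + 1) * ((t:ℝ) * β) ^ k := by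
            apply mul_le_mul_of_nonneg_left
              (pow_le_pow_left₀ (Nat.cast_nonneg r) hρβ k) (by positivity)
        _ = (t:ℝ) ^ k * (β ^ k * (t:ℝ) ^ (r + 1)) := by rw [mul_pow]; ring
        _ < (t:ℝ) ^ k * 1 := by
            apply mul_lt_mul_of_pos_left hsmall (by positivity)
        _ = (t:ℝ) ^ k := mul_one _
  exact_mod_cast hreal

lemma arith_cover (t r M s : ℕ) (μ : ℝ) (hμM : μ = (M:ℝ)) (hτ2 : (2:ℝ) ≤ (t:ℝ))
    (hμpos : 0 < μ)
    (hrge : (t:ℝ) * Real.log (2 * (t:ℝ)) / μ ≤ (r:ℝ))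
    (hs1 : r + 1 ≤ s) (hs2 : s ≤ t) :
    (((t - s : ℕ)) ^ M : ℝ) ≤ (t:ℝ) ^ M * (2 * (t:ℝ))⁻¹ := by
  have hτpos : (0:ℝ) < (t:ℝ) := by linarith
  have hscast : ((s:ℝ)) ≤ (t:ℝ) := by exact_mod_cast hs2
  have hrcast : ((r:ℝ) + 1) ≤ (s:ℝ) := by exact_mod_cast hs1
  have hsub : ((t - s : ℕ) : ℝ) = (t:ℝ) - (s:ℝ) := by
    push_cast [Nat.cast_sub hs2]; ring
  rw [hsub]
  have hb0 : (0:ℝ) ≤ (t:ℝ) - (s:ℝ) := by linarith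
  have hb2 : (t:ℝ) - ((r:ℝ) + 1) ≤ (t:ℝ) * Real.exp (-(((r:ℝ) + 1) / (t:ℝ))) := by
    have hh := Real.one_sub_le_exp_neg (((r:ℝ) + 1) / (t:ℝ))
    have h' : (t:ℝ) * (1 - ((r:ℝ) + 1) / (t:ℝ))
        ≤ (t:ℝ) * Real.exp (-(((r:ℝ) + 1) / (t:ℝ))) :=
      mul_le_mul_of_nonneg_left hh (by positivity)
    calc (t:ℝ) - ((r:ℝ) + 1) = (t:ℝ) * (1 - ((r:ℝ) + 1) / (t:ℝ)) := by field_simp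
      _ ≤ _ := h'
  have hb3 : ((t:ℝ) - (s:ℝ)) ^ M ≤ ((t:ℝ) * Real.exp (-(((r:ℝ) + 1) / (t:ℝ)))) ^ M :=
    pow_le_pow_left₀ hb0 (le_trans (by linarith) hb2) M
  have hb4 : ((t:ℝ) * Real.exp (-(((r:ℝ) + 1) / (t:ℝ)))) ^ M
      = (t:ℝ) ^ M * Real.exp ((M:ℝ) * (-(((r:ℝ) + 1) / (t:ℝ)))) := by
    rw [mul_pow, Real.exp_nat_mul]
  have hb5 : Real.exp ((M:ℝ) * (-(((r:ℝ) + 1) / (t:ℝ)))) ≤ (2 * (t:ℝ))⁻¹ := by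
    have harg : Real.log (2 * (t:ℝ)) ≤ (M:ℝ) * (((r:ℝ) + 1) / (t:ℝ)) := by
      have h6 : (t:ℝ) * Real.log (2 * (t:ℝ)) ≤ (r:ℝ) * μ := by
        rw [div_le_iff₀ hμpos] at hrge; linarith
      rw [show (M:ℝ) * (((r:ℝ) + 1) / (t:ℝ)) = ((r:ℝ) + 1) * μ / (t:ℝ) by
        rw [hμM]; ring]
      rw [le_div_iff₀ hτpos]
      nlinarith [h6, hμpos]
    calc Real.exp ((M:ℝ) * (-(((r:ℝ) + 1) / (t:ℝ))))
        = (Real.exp ((M:ℝ) * (((r:ℝ) + 1) / (t:ℝ))))⁻¹ := by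
          rw [← Real.exp_neg]; ring_nf
      _ ≤ (2 * (t:ℝ))⁻¹ := by
          apply inv_anti₀ (by positivity)
          calc 2 * (t:ℝ) = Real.exp (Real.log (2 * (t:ℝ))) :=
                (Real.exp_log (by positivity)).symm
            _ ≤ Real.exp ((M:ℝ) * (((r:ℝ) + 1) / (t:ℝ))) := Real.exp_le_exp.mpr harg
  calc ((t:ℝ) - (s:ℝ)) ^ M
      ≤ (t:ℝ) ^ M * Real.exp ((M:ℝ) * (-(((r:ℝ) + 1) / (t:ℝ)))) := by
        rw [← hb4]; exact hb3
    _ ≤ (t:ℝ) ^ M * (2 * (t:ℝ))⁻¹ := mul_le_mul_of_nonneg_left hb5 (by positivity)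


set_option maxHeartbeats 1600000 in
/-- **Theorem 5** (covering by permutations for the constant composition ensemble): for
every `R̃ > 0` and `ε > 0` and all large enough `n`, for every `n`-type `Q` with
`H(Q) ≥ R̃ + ε` and `N = ⌈exp (n R̃)⌉`, there are `k ≤ exp (n(H(Q) − R̃ + ε))` permutations
`π_1, …, π_k` of `{1,…,n}` such that at least half of the `N`-tuples `C ∈ T_n(Q)^N` satisfy
`⋃_i π_i[C] = T_n(Q)`. -/
theorem covering_constant_composition_ensemble
    {X : Type*} [Fintype X] [Nonempty X] :
    ∀ Rt ε : ℝ, 0 < Rt → 0 < ε → ∃ N₀ : ℕ, ∀ n ≥ N₀, ∀ Q : X → ℝ,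
      IsNType n Q → Rt + ε ≤ shEntropy Q →
      ∃ (k : ℕ) (π : Fin k → Equiv.Perm (Fin n)),
        (k : ℝ) ≤ Real.exp (n * (shEntropy Q - Rt + ε)) ∧
        ((ccCodebooks n (Mn Rt n) Q).card : ℝ) / 2 ≤
          (((ccCodebooks n (Mn Rt n) Q).filter fun C =>
            (Finset.univ.biUnion fun i =>
              (Finset.univ.image C).image fun x => x ∘ (π i)) = typeClass n Q).card : ℝ) := by
  intro Rt ε hRt hε
  classical
  set L : ℝ := Real.log (Fintype.card X) with hLdef
  have hL0 : 0 ≤ L := Real.log_nonneg (by exact_mod_cast Fintype.card_pos)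
  have hlog2pos : (0:ℝ) < Real.log 2 := Real.log_pos (by norm_num)
  have hev1 : ∀ᶠ n : ℕ in Filter.atTop,
      Real.log (2 * (Real.log 2 + n * L)) ≤ n * Rt / 2 := by
    have hq := eventually_affine_le_quad (2 * Real.log 2) (2 * L) (Rt ^ 2 / 16) (by positivity)
    filter_upwards [hq] with n hn
    have hA : (0:ℝ) < Real.log 2 + n * L := by positivity
    have h2A : (0:ℝ) < 2 * (Real.log 2 + n * L) := by linarith
    have hs : Real.sqrt (2 * (Real.log 2 + n * L)) ≤ (n:ℝ) * Rt / 4 := by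
      rw [show (n:ℝ) * Rt / 4 = Real.sqrt (((n:ℝ) * Rt / 4) ^ 2) from
        (Real.sqrt_sq (by positivity)).symm]
      apply Real.sqrt_le_sqrt
      nlinarith [hn]
    calc Real.log (2 * (Real.log 2 + n * L))
        ≤ 2 * Real.sqrt (2 * (Real.log 2 + n * L)) := log_le_two_sqrt h2A
      _ ≤ 2 * ((n:ℝ) * Rt / 4) := by linarith
      _ = n * Rt / 2 := by ring
  have hev2 : ∀ᶠ n : ℕ in Filter.atTop,
      16 * L * (Real.log 2 + n * L) < Real.exp (n * ε) * Rt := by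
    have hq := eventually_affine_le_quad (16 * L * Real.log 2 + 1) (16 * L ^ 2)
      (Rt * ε ^ 2 / 4) (by positivity)
    filter_upwards [hq] with n hn
    have he : ((n:ℝ) * ε) ^ 2 / 4 ≤ Real.exp (n * ε) := sq_div_four_le_exp (by positivity)
    nlinarith [hn, he, hRt]
  have hev3 : ∀ᶠ n : ℕ in Filter.atTop, (4:ℝ) ≤ Real.exp ((n:ℝ) * (2 * ε)) := by
    filter_upwards [Filter.eventually_ge_atTop ⌈3 / (2 * ε)⌉₊] with n hn
    have h1 : 3 / (2 * ε) ≤ (n:ℝ) := le_trans (Nat.le_ceil _) (by exact_mod_cast hn)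
    have h2 : (3:ℝ) ≤ n * (2 * ε) := by
      rw [div_le_iff₀ (by positivity)] at h1; linarith
    linarith [Real.add_one_le_exp ((n:ℝ) * (2 * ε))]
  obtain ⟨N₀, hN₀⟩ := Filter.eventually_atTop.mp
    ((hev1.and (hev2.and hev3)).and (Filter.eventually_ge_atTop 1))
  refine ⟨N₀, fun n hn Q hQ hH => ?_⟩
  obtain ⟨⟨h1, h2, h3⟩, hn1⟩ := hN₀ n hn
  have hnpos : 0 < n := hn1
  set H := shEntropy Q with hHdef
  set T := typeClass n Q with hTdef
  set t := T.card with htdef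
  set M := Mn Rt n with hMdef
  have hM1 : 1 ≤ M := Nat.one_le_ceil_iff.mpr (Real.exp_pos _)
  have hCB : ccCodebooks n M Q = Fintype.piFinset fun _ : Fin M => T := by
    ext C; simp [ccCodebooks, Fintype.mem_piFinset, hTdef]
  have hCBcard : (ccCodebooks n M Q).card = t ^ M := by
    rw [hCB, Fintype.card_piFinset]; simp
    rfl
  have hexp0 : (0:ℝ) ≤ (n:ℝ) * (H - Rt + ε) := by nlinarith [Nat.cast_nonneg (α := ℝ) n, hH, hε]
  have hexp1 : (1:ℝ) ≤ Real.exp ((n:ℝ) * (H - Rt + ε)) := Real.one_le_exp hexp0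
  by_cases htt : t ≤ 1
  · refine ⟨1, fun _ => 1, by simpa using hexp1, ?_⟩
    have hfix : ((ccCodebooks n M Q).filter fun C =>
        (Finset.univ.biUnion fun i : Fin 1 =>
          (Finset.univ.image C).image fun x => x ∘ ((fun _ : Fin 1 => (1 : Equiv.Perm (Fin n))) i))
          = typeClass n Q)
        = ccCodebooks n M Q := by
      apply Finset.filter_eq_self.mpr
      intro C hC
      have hCm : ∀ m, C m ∈ T := by
        rw [hCB] at hC; exact Fintype.mem_piFinset.mp hC
      rw [← hTdef]
      apply Finset.Subset.antisymm
      · intro z hz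
        obtain ⟨i, _, hz⟩ := Finset.mem_biUnion.mp hz
        obtain ⟨x, hx, rfl⟩ := Finset.mem_image.mp hz
        obtain ⟨m, _, rfl⟩ := Finset.mem_image.mp hx
        simpa using hCm m
      · intro y hy
        have h0 : C ⟨0, hM1⟩ = y := Finset.card_le_one.mp htt _ (hCm ⟨0, hM1⟩) _ hy
        refine Finset.mem_biUnion.mpr ⟨0, Finset.mem_univ _, ?_⟩
        refine Finset.mem_image.mpr
          ⟨C ⟨0, hM1⟩, Finset.mem_image.mpr ⟨⟨0, hM1⟩, Finset.mem_univ _, rfl⟩, ?_⟩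
        simp [h0]
    rw [hfix]
    have hnn : (0:ℝ) ≤ ((ccCodebooks n M Q).card : ℝ) := by positivity
    linarith
  · push_neg at htt
    have htt2 : 2 ≤ t := htt
    have ht0 : 0 < t := by omega
    have hτ2 : (2:ℝ) ≤ (t:ℝ) := by exact_mod_cast htt2
    have hτpos : (0:ℝ) < (t:ℝ) := by linarith
    set μ : ℝ := (M : ℝ) with hμdef
    have hμE : Real.exp (n * Rt) ≤ μ := Nat.le_ceil _
    have hμpos : 0 < μ := lt_of_lt_of_le (Real.exp_pos _) hμE
    have hτexp : (t:ℝ) ≤ Real.exp (n * H) := card_typeClass_le hnpos hQ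
    have hτlogL : Real.log (t:ℝ) ≤ n * L := by
      have hcard : t ≤ Fintype.card X ^ n := by
        have h := Finset.card_le_univ T
        rwa [Fintype.card_fun, Fintype.card_fin] at h
      calc Real.log (t:ℝ) ≤ Real.log ((Fintype.card X : ℝ) ^ n) :=
            Real.log_le_log (by positivity) (by exact_mod_cast hcard)
        _ = n * L := by rw [Real.log_pow, hLdef]
    have hlog2t_pos : 0 < Real.log (2 * (t:ℝ)) := Real.log_pos (by linarith)
    have hlog2tA : Real.log (2 * (t:ℝ)) ≤ Real.log 2 + n * L := by
      rw [Real.log_mul (by norm_num) (by positivity)]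
      linarith
    set r := ⌈(t:ℝ) * Real.log (2 * (t:ℝ)) / μ⌉₊ with hrdef
    have hr1 : 1 ≤ r := Nat.one_le_ceil_iff.mpr (by positivity)
    have hrge : (t:ℝ) * Real.log (2 * (t:ℝ)) / μ ≤ (r:ℝ) := Nat.le_ceil _
    have hrlt : (r:ℝ) < (t:ℝ) * Real.log (2 * (t:ℝ)) / μ + 1 :=
      Nat.ceil_lt_add_one (by positivity)
    set k := ⌊Real.exp ((n:ℝ) * (H - Rt + ε))⌋₊ with hkdef
    have hv4 : (4:ℝ) ≤ Real.exp ((n:ℝ) * (H - Rt + ε)) := by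
      refine le_trans h3 (Real.exp_le_exp.mpr ?_)
      have hn0 : (0:ℝ) ≤ (n:ℝ) := Nat.cast_nonneg n
      nlinarith [hH]
    have hk3 : 3 ≤ k := Nat.le_floor (by push_cast; linarith)
    have hkv : Real.exp ((n:ℝ) * (H - Rt + ε)) / 2 ≤ (k:ℝ) := by
      have h4 : Real.exp ((n:ℝ) * (H - Rt + ε)) - 1 < (k:ℝ) :=
        Nat.sub_one_lt_floor _
      linarith
    have harith : t ^ (r + 1) * r ^ k < t ^ k :=
      arith_key n t r k Rt ε L H μ hRt hε hn1 hτ2 hτexp hτlogL hL0 hμE hrge hrlt hr1 hk3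
        hkv h1 h2
    obtain ⟨π, hπgood⟩ := exists_good_perms hnpos k r ht0 harith
    refine ⟨k, π, Nat.floor_le (Real.exp_pos _).le, ?_⟩
    have hSyT : ∀ y ∈ T, (Finset.univ.image fun i => y ∘ ⇑((π i)⁻¹)) ⊆ T := by
      intro y hy z hz
      obtain ⟨i, _, rfl⟩ := Finset.mem_image.mp hz
      exact (comp_perm_mem_typeClass _).mpr hy
    have hbadsub : ((ccCodebooks n M Q).filter fun C =>
        ¬ ((Finset.univ.biUnion fun i =>
          (Finset.univ.image C).image fun x => x ∘ ⇑(π i)) = T))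
        ⊆ T.biUnion fun y => Fintype.piFinset fun _ : Fin M =>
            T \ (Finset.univ.image fun i => y ∘ ⇑((π i)⁻¹)) := by
      intro C hC
      obtain ⟨hCB', hnP⟩ := Finset.mem_filter.mp hC
      have hCm : ∀ m, C m ∈ T := by rw [hCB] at hCB'; exact Fintype.mem_piFinset.mp hCB'
      have hsubT : (Finset.univ.biUnion fun i =>
          (Finset.univ.image C).image fun x => x ∘ ⇑(π i)) ⊆ T := by
        intro z hz
        obtain ⟨i, _, hz⟩ := Finset.mem_biUnion.mp hz
        obtain ⟨x, hx, rfl⟩ := Finset.mem_image.mp hz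
        obtain ⟨m, _, rfl⟩ := Finset.mem_image.mp hx
        exact (comp_perm_mem_typeClass _).mpr (hCm m)
      obtain ⟨y, hyT, hyn⟩ := Finset.exists_of_ssubset (lt_of_le_of_ne hsubT hnP)
      refine Finset.mem_biUnion.mpr ⟨y, hyT, Fintype.mem_piFinset.mpr fun m => ?_⟩
      refine Finset.mem_sdiff.mpr ⟨hCm m, fun hmem => ?_⟩
      obtain ⟨i, _, hi⟩ := Finset.mem_image.mp hmem
      apply hyn
      refine Finset.mem_biUnion.mpr ⟨i, Finset.mem_univ _, ?_⟩
      refine Finset.mem_image.mpr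
        ⟨C m, Finset.mem_image.mpr ⟨m, Finset.mem_univ _, rfl⟩, ?_⟩
      rw [← hi]
      funext s
      simp
    have hstep : ∀ y ∈ T, ((Fintype.piFinset fun _ : Fin M =>
        T \ (Finset.univ.image fun i => y ∘ ⇑((π i)⁻¹))).card : ℝ)
        ≤ (t:ℝ) ^ M * (2 * (t:ℝ))⁻¹ := by
      intro y hy
      have hs1 : r + 1 ≤ (Finset.univ.image fun i => y ∘ ⇑((π i)⁻¹)).card := hπgood y hy
      have hs2 : (Finset.univ.image fun i => y ∘ ⇑((π i)⁻¹)).card ≤ t :=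
        Finset.card_le_card (hSyT y hy)
      have hcard : (Fintype.piFinset fun _ : Fin M =>
          T \ (Finset.univ.image fun i => y ∘ ⇑((π i)⁻¹))).card
          = (t - (Finset.univ.image fun i => y ∘ ⇑((π i)⁻¹)).card) ^ M := by
        rw [Fintype.card_piFinset]
        rw [Finset.prod_congr rfl fun _ _ => Finset.card_sdiff_of_subset (hSyT y hy)]
        rw [Finset.prod_const]
        simp
        rfl
      rw [hcard]
      exact_mod_cast arith_cover t r M _ μ hμdef hτ2 hμpos hrge hs1 hs2
    have hbadcard : (((ccCodebooks n M Q).filter fun C =>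
        ¬ ((Finset.univ.biUnion fun i =>
          (Finset.univ.image C).image fun x => x ∘ ⇑(π i)) = T)).card : ℝ)
        ≤ (t:ℝ) ^ M / 2 := by
      calc (((ccCodebooks n M Q).filter fun C =>
            ¬ ((Finset.univ.biUnion fun i =>
              (Finset.univ.image C).image fun x => x ∘ ⇑(π i)) = T)).card : ℝ)
          ≤ ((T.biUnion fun y => Fintype.piFinset fun _ : Fin M =>
              T \ (Finset.univ.image fun i => y ∘ ⇑((π i)⁻¹))).card : ℝ) := by
            exact_mod_cast Finset.card_le_card hbadsub
        _ ≤ ∑ y ∈ T, ((Fintype.piFinset fun _ : Fin M =>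
              T \ (Finset.univ.image fun i => y ∘ ⇑((π i)⁻¹))).card : ℝ) := by
            exact_mod_cast Finset.card_biUnion_le
        _ ≤ ∑ _y ∈ T, (t:ℝ) ^ M * (2 * (t:ℝ))⁻¹ := Finset.sum_le_sum hstep
        _ = (t:ℝ) * ((t:ℝ) ^ M * (2 * (t:ℝ))⁻¹) := by
            rw [Finset.sum_const, nsmul_eq_mul, ← htdef]
        _ = (t:ℝ) ^ M / 2 := by field_simp
    have hsplit := Finset.card_filter_add_card_filter_not
      (s := ccCodebooks n M Q) (p := fun C =>
        (Finset.univ.biUnion fun i =>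
          (Finset.univ.image C).image fun x => x ∘ ⇑(π i)) = T)
    have hcast : (((ccCodebooks n M Q).filter fun C =>
          (Finset.univ.biUnion fun i =>
            (Finset.univ.image C).image fun x => x ∘ ⇑(π i)) = T).card : ℝ)
        + (((ccCodebooks n M Q).filter fun C =>
          ¬ ((Finset.univ.biUnion fun i =>
            (Finset.univ.image C).image fun x => x ∘ ⇑(π i)) = T)).card : ℝ)
        = ((ccCodebooks n M Q).card : ℝ) := by exact_mod_cast hsplit
    have hc1 : ((ccCodebooks n M Q).card : ℝ) = (t:ℝ) ^ M := by
      rw [hCBcard]; push_cast; ring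
    linarith


end
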